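/- Let a < b be real numbers, X and Y Hausdorff locally convex spaces with Y sequentially complete. If f ∈ C([a,b];X) and α : [a,b] → L(X;Y) is of bounded semivariation, then f is Riemann–Stieltjes integrable with respect to α, and the linear map I_α : C([a,b];X) → Y, I_α(g) := ∫_a^b g(s) dα(s), is continuous; in fact, for every continuous seminorm q on Y there is a continuous seminorm p on X with SV_{q,p}(α) < ∞ and q(∫_a^b f(s) dα(s)) ≤ SV_{q,p}(α) · sup_{s∈[a,b]} p(f(s)). -/

import Mathlib

open Filter Topology Set Classical
open scoped ENNReal

/-- A partition `a = d₀ < d₁ < ⋯ < dₙ = b` of the interval `[a,b]`. -/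
structure RSPartition (a b : ℝ) where
  n : ℕ
  points : ℕ → ℝ
  first_eq : points 0 = a
  last_eq : points n = b
  increasing : ∀ i, i < n → points i < points (i + 1)

section Defs

variable {X Y U : Type*}
variable [AddCommGroup X] [Module ℝ X] [UniformSpace X] [IsUniformAddGroup X] [ContinuousSMul ℝ X]
variable [AddCommGroup Y] [Module ℝ Y] [UniformSpace Y] [IsUniformAddGroup Y] [ContinuousSMul ℝ Y]
variable [AddCommGroup U] [Module ℝ U] [UniformSpace U] [IsUniformAddGroup U] [ContinuousSMul ℝ U]

/-- The semivariation `SV_{q,p}(α)` of `α : [a,b] → L(X;Y)` (value in `ℝ≥0∞`). -/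
noncomputable def SV (α : ℝ → X →L[ℝ] Y) (q : Seminorm ℝ Y) (p : Seminorm ℝ X)
    (a b : ℝ) : ℝ≥0∞ :=
  ⨆ (d : RSPartition a b) (x : ℕ → X) (_ : ∀ i, i < d.n → p (x i) ≤ 1),
    ENNReal.ofReal
      (q (∑ i ∈ Finset.range d.n,
        (α (d.points (i + 1)) (x i) - α (d.points i) (x i))))

/-- `α : [a,b] → L(X;Y)` is of bounded semivariation. -/
def BoundedSemivariation (α : ℝ → X →L[ℝ] Y) (a b : ℝ) : Prop :=
  ∀ q : Seminorm ℝ Y, Continuous ⇑q →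
    ∃ p : Seminorm ℝ X, Continuous ⇑p ∧ SV α q p a b < ⊤

/-- `y` is the Riemann–Stieltjes integral `∫_a^b f dα`. -/
def IsRSIntegral (α : ℝ → X →L[ℝ] Y) (f : ℝ → X) (a b : ℝ) (y : Y) : Prop :=
  ∀ q : Seminorm ℝ Y, Continuous ⇑q → ∀ ε : ℝ, 0 < ε → ∃ δ : ℝ, 0 < δ ∧
    ∀ (d : RSPartition a b) (c : ℕ → ℝ),
      (∀ i, i < d.n → d.points (i + 1) - d.points i < δ) →
      (∀ i, i < d.n → c i ∈ Set.Icc (d.points i) (d.points (i + 1))) →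
      q ((∑ i ∈ Finset.range d.n,
        (α (d.points (i + 1)) (f (c i)) - α (d.points i) (f (c i)))) - y) < ε

/-- The Riemann–Stieltjes integral `∫_a^b f dα` (junk value `0` if it does not exist). -/
noncomputable def RSIntegral (α : ℝ → X →L[ℝ] Y) (f : ℝ → X) (a b : ℝ) : Y :=
  if h : ∃ y, IsRSIntegral α f a b y then h.choose else 0

/-- `y` is the Riemann integral `∫_a^b f(s) ds`. -/
def IsRiemannIntegral (f : ℝ → X) (a b : ℝ) (y : X) : Prop :=
  ∀ q : Seminorm ℝ X, Continuous ⇑q → ∀ ε : ℝ, 0 < ε → ∃ δ : ℝ, 0 < δ ∧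
    ∀ (d : RSPartition a b) (c : ℕ → ℝ),
      (∀ i, i < d.n → d.points (i + 1) - d.points i < δ) →
      (∀ i, i < d.n → c i ∈ Set.Icc (d.points i) (d.points (i + 1))) →
      q ((∑ i ∈ Finset.range d.n, (d.points (i + 1) - d.points i) • f (c i)) - y) < ε

/-- The Riemann integral `∫_a^b f(s) ds` (junk value `0` if it does not exist). -/
noncomputable def riemannIntegral (f : ℝ → X) (a b : ℝ) : X :=
  if h : ∃ y, IsRiemannIntegral f a b y then h.choose else 0

/-- Sequential completeness: every Cauchy sequence converges. -/
def SequentiallyComplete (Z : Type*) [UniformSpace Z] : Prop :=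
  ∀ u : ℕ → Z, CauchySeq u → ∃ z, Filter.Tendsto u Filter.atTop (𝓝 z)

/-- A strongly continuous, locally equicontinuous semigroup. -/
def IsSCLESemigroup (T : ℝ → X →L[ℝ] X) : Prop :=
  T 0 = ContinuousLinearMap.id ℝ X ∧
  (∀ s t : ℝ, 0 ≤ s → 0 ≤ t → T (s + t) = (T s).comp (T t)) ∧
  (∀ x : X, ContinuousOn (fun t => T t x) (Set.Ici (0:ℝ))) ∧
  (∀ q : Seminorm ℝ X, Continuous ⇑q → ∀ t₀ : ℝ, 0 ≤ t₀ →
    ∃ p : Seminorm ℝ X, Continuous ⇑p ∧ ∃ C : ℝ, 0 ≤ C ∧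
      ∀ t ∈ Set.Icc (0:ℝ) t₀, ∀ x : X, q (T t x) ≤ C * p x)

/-- A strongly continuous, quasi-equicontinuous semigroup. -/
def IsSCQESemigroup (T : ℝ → X →L[ℝ] X) : Prop :=
  T 0 = ContinuousLinearMap.id ℝ X ∧
  (∀ s t : ℝ, 0 ≤ s → 0 ≤ t → T (s + t) = (T s).comp (T t)) ∧
  (∀ x : X, ContinuousOn (fun t => T t x) (Set.Ici (0:ℝ))) ∧
  (∃ ω : ℝ, ∀ q : Seminorm ℝ X, Continuous ⇑q →
    ∃ p : Seminorm ℝ X, Continuous ⇑p ∧ ∃ C : ℝ, 0 ≤ C ∧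
      ∀ t : ℝ, 0 ≤ t → ∀ x : X, q (Real.exp (-ω * t) • T t x) ≤ C * p x)

/-- The domain of the generator of a semigroup. -/
def genDomain (T : ℝ → X →L[ℝ] X) : Set X :=
  {x | ∃ y : X, Filter.Tendsto (fun t : ℝ => t⁻¹ • (T t x - x)) (𝓝[>] (0:ℝ)) (𝓝 y)}

/-- The generator of a semigroup (junk value `0` outside of its domain). -/
noncomputable def generator (T : ℝ → X →L[ℝ] X) (x : X) : X :=
  if h : ∃ y : X, Filter.Tendsto (fun t : ℝ => t⁻¹ • (T t x - x)) (𝓝[>] (0:ℝ)) (𝓝 y)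
  then h.choose else 0

/-- The convolution `(T∗f)(t) = ∫_0^t T(t-s) f(s) ds`. -/
noncomputable def sgConv (T : ℝ → X →L[ℝ] X) (f : ℝ → X) (t : ℝ) : X :=
  riemannIntegral (fun s => T (t - s) (f s)) 0 t

/-- `v` is the derivative of `u` at `t` within the set `s` (limit of difference quotients). -/
def HasDerivWithinSetLC (u : ℝ → X) (v : X) (s : Set ℝ) (t : ℝ) : Prop :=
  Filter.Tendsto (fun h : ℝ => h⁻¹ • (u (t + h) - u t))
    (𝓝[{h : ℝ | h ≠ 0 ∧ t + h ∈ s}] (0:ℝ)) (𝓝 v)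

/-- `u` is continuously differentiable on `s` with derivative `u'`. -/
def IsC1On (u u' : ℝ → X) (s : Set ℝ) : Prop :=
  ContinuousOn u s ∧ ContinuousOn u' s ∧ ∀ t ∈ s, HasDerivWithinSetLC u (u' t) s t

/-- `u` is a strict solution of `u' = Au + g` on `[0,r]`, `u(0) = x`. -/
def IsStrictSolution (T : ℝ → X →L[ℝ] X) (g : ℝ → X) (x : X) (r : ℝ) (u : ℝ → X) : Prop :=
  u 0 = x ∧ (∀ t ∈ Set.Icc (0:ℝ) r, u t ∈ genDomain T) ∧
  ∃ u' : ℝ → X, IsC1On u u' (Set.Icc (0:ℝ) r) ∧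
    ∀ t ∈ Set.Icc (0:ℝ) r, u' t = generator T (u t) + g t

/-- `(T(t))` satisfies C-maximal regularity for `(B,r)`. -/
def CMaxReg (T : ℝ → X →L[ℝ] X) (B : U →L[ℝ] X) (r : ℝ) : Prop :=
  ∀ f : ℝ → U, ContinuousOn f (Set.Icc (0:ℝ) r) →
    (∀ t ∈ Set.Icc (0:ℝ) r, sgConv T (fun s => B (f s)) t ∈ genDomain T) ∧
    ContinuousOn (fun t => generator T (sgConv T (fun s => B (f s)) t)) (Set.Icc (0:ℝ) r)

end Defs

set_option linter.unusedSectionVars false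

namespace RSPartition

variable {a b : ℝ}

theorem mono (d : RSPartition a b) : ∀ {i j : ℕ}, i ≤ j → j ≤ d.n → d.points i ≤ d.points j := by
  intro i j
  induction j with
  | zero => intro hij _; interval_cases i; rfl
  | succ k ih =>
    intro hij hj
    rcases Nat.eq_or_lt_of_le hij with rfl | h
    · rfl
    · exact le_trans (ih (Nat.lt_succ_iff.mp h) (by omega))
        (le_of_lt (d.increasing k (by omega)))

theorem smono (d : RSPartition a b) {i j : ℕ} (hij : i < j) (hj : j ≤ d.n) :
    d.points i < d.points j := by
  obtain ⟨k, rfl⟩ : ∃ k, j = k + 1 := ⟨j - 1, by omega⟩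
  exact lt_of_le_of_lt (d.mono (Nat.lt_succ_iff.mp hij) (by omega)) (d.increasing k (by omega))

theorem points_lb (d : RSPartition a b) {j : ℕ} (hj : j ≤ d.n) : a ≤ d.points j := by
  have h := d.mono (Nat.zero_le j) hj; rwa [d.first_eq] at h

theorem points_ub (d : RSPartition a b) {j : ℕ} (hj : j ≤ d.n) : d.points j ≤ b := by
  have h := d.mono hj le_rfl; rwa [d.last_eq] at h

theorem points_ub_strict (d : RSPartition a b) {j : ℕ} (hj : j < d.n) : d.points j < b := by
  have h := d.smono hj le_rfl; rwa [d.last_eq] at h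

theorem n_pos (hab : a < b) (d : RSPartition a b) : 0 < d.n := by
  rcases Nat.eq_zero_or_pos d.n with h | h
  · exfalso
    have := d.last_eq
    rw [h, d.first_eq] at this
    exact absurd this (ne_of_lt hab)
  · exact h

noncomputable def idx (d : RSPartition a b) (s : ℝ) : ℕ :=
  Nat.findGreatest (fun i => d.points i ≤ s) (d.n - 1)

theorem idx_spec (hab : a < b) (d : RSPartition a b) {s : ℝ} (h1 : a ≤ s) (h2 : s < b) :
    d.idx s < d.n ∧ d.points (d.idx s) ≤ s ∧ s < d.points (d.idx s + 1) := by
  have hn := d.n_pos hab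
  have hle : d.idx s ≤ d.n - 1 := Nat.findGreatest_le _
  have hlt : d.idx s < d.n := by omega
  have hP : d.points (d.idx s) ≤ s :=
    Nat.findGreatest_spec (P := fun i => d.points i ≤ s) (Nat.zero_le _)
      (by show d.points 0 ≤ s; rw [d.first_eq]; exact h1)
  refine ⟨hlt, hP, ?_⟩
  rcases Nat.lt_or_ge (d.idx s) (d.n - 1) with h | h
  · have hg := Nat.findGreatest_is_greatest (P := fun i => d.points i ≤ s)
      (k := d.idx s + 1) (Nat.lt_succ_self _) (by omega)
    exact lt_of_not_ge hg
  · have he : d.idx s + 1 = d.n := by omega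
    rw [he, d.last_eq]; exact h2

theorem idx_eq (hab : a < b) (d : RSPartition a b) {s : ℝ} {i : ℕ} (hi : i < d.n)
    (h1 : d.points i ≤ s) (h2 : s < d.points (i + 1)) : d.idx s = i := by
  have ha : a ≤ s := le_trans (d.points_lb (le_of_lt hi)) h1
  have hb : s < b := lt_of_lt_of_le h2 (d.points_ub hi)
  obtain ⟨hlt, hp1, hp2⟩ := d.idx_spec hab ha hb
  rcases lt_trichotomy (d.idx s) i with h | h | h
  · exact absurd (le_trans (d.mono (by omega : d.idx s + 1 ≤ i) (le_of_lt hi)) h1)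
      (not_le_of_gt hp2)
  · exact h
  · exact absurd (le_trans (d.mono (by omega : i + 1 ≤ d.idx s) (by omega)) hp1)
      (not_le_of_gt h2)

end RSPartition

section Aux

variable {X Y : Type*}
variable [AddCommGroup X] [Module ℝ X] [UniformSpace X] [IsUniformAddGroup X] [ContinuousSMul ℝ X]
variable [AddCommGroup Y] [Module ℝ Y] [UniformSpace Y] [IsUniformAddGroup Y] [ContinuousSMul ℝ Y]
variable {a b : ℝ}

noncomputable def RSsum (α : ℝ → X →L[ℝ] Y) (d : RSPartition a b) (x : ℕ → X) : Y :=
  ∑ i ∈ Finset.range d.n, (α (d.points (i + 1)) (x i) - α (d.points i) (x i))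

theorem RSsum_sub (α : ℝ → X →L[ℝ] Y) (d : RSPartition a b) (x x' : ℕ → X) :
    RSsum α d (fun i => x i - x' i) = RSsum α d x - RSsum α d x' := by
  rw [RSsum, RSsum, RSsum, ← Finset.sum_sub_distrib]
  refine Finset.sum_congr rfl fun i _ => ?_
  rw [map_sub, map_sub]
  abel

theorem ofReal_le_SV (α : ℝ → X →L[ℝ] Y) (q : Seminorm ℝ Y) (p : Seminorm ℝ X)
    (d : RSPartition a b) (x : ℕ → X) (hx : ∀ i, i < d.n → p (x i) ≤ 1) :
    ENNReal.ofReal (q (RSsum α d x)) ≤ SV α q p a b :=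
  le_iSup_of_le d <| le_iSup_of_le x <| le_iSup_of_le hx le_rfl

theorem rssum_le (α : ℝ → X →L[ℝ] Y) {q : Seminorm ℝ Y} {p : Seminorm ℝ X}
    (hSV : SV α q p a b < ⊤) (d : RSPartition a b) (x : ℕ → X) {M : ℝ} (hM : 0 < M)
    (hx : ∀ i, i < d.n → p (x i) ≤ M) :
    q (RSsum α d x) ≤ (SV α q p a b).toReal * M := by
  set x' : ℕ → X := fun i => M⁻¹ • x i with hx'def
  have hx' : ∀ i, i < d.n → p (x' i) ≤ 1 := by
    intro i hi
    have : p (x' i) = M⁻¹ * p (x i) := by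
      rw [hx'def]
      simp only [map_smul_eq_mul, Real.norm_eq_abs, abs_inv, abs_of_pos hM]
    rw [this]
    rw [inv_mul_le_iff₀ hM, mul_one]
    exact hx i hi
  have h1 : ENNReal.ofReal (q (RSsum α d x')) ≤ SV α q p a b :=
    ofReal_le_SV α q p d x' hx'
  have h2 : q (RSsum α d x') ≤ (SV α q p a b).toReal := by
    have := ENNReal.toReal_mono hSV.ne h1
    rwa [ENNReal.toReal_ofReal (apply_nonneg q _)] at this
  have h3 : RSsum α d x = M • RSsum α d x' := by
    rw [RSsum, RSsum, Finset.smul_sum]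
    refine Finset.sum_congr rfl fun i _ => ?_
    rw [smul_sub, ← map_smul, ← map_smul, hx'def]
    simp only [smul_inv_smul₀ hM.ne']
  calc q (RSsum α d x) = M * q (RSsum α d x') := by
        rw [h3, map_smul_eq_mul, Real.norm_eq_abs, abs_of_pos hM]
    _ ≤ M * (SV α q p a b).toReal := by
        exact mul_le_mul_of_nonneg_left h2 (le_of_lt hM)
    _ = (SV α q p a b).toReal * M := mul_comm _ _

theorem refine_sum (hab : a < b) (α : ℝ → X →L[ℝ] Y) (d e : RSPartition a b)
    (hsub : ∀ i, i ≤ d.n → ∃ j, j ≤ e.n ∧ e.points j = d.points i)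
    (g : ℝ → X)
    (hg : ∀ i, i < d.n → ∀ s, d.points i ≤ s → s < d.points (i + 1) → g s = g (d.points i)) :
    RSsum α e (fun j => g (e.points j)) = RSsum α d (fun i => g (d.points i)) := by
  classical
  have hmaps : ∀ j ∈ Finset.range e.n, d.idx (e.points j) ∈ Finset.range d.n := by
    intro j hj
    rw [Finset.mem_range] at hj ⊢
    exact (d.idx_spec hab (e.points_lb (le_of_lt hj)) (e.points_ub_strict hj)).1
  rw [RSsum, RSsum, ← Finset.sum_fiberwise_of_maps_to hmaps
    (fun j => α (e.points (j + 1)) (g (e.points j)) - α (e.points j) (g (e.points j)))]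
  refine Finset.sum_congr rfl fun i hi => ?_
  rw [Finset.mem_range] at hi
  obtain ⟨j₀, hj₀n, hj₀⟩ := hsub i (le_of_lt hi)
  obtain ⟨j₁, hj₁n, hj₁⟩ := hsub (i + 1) hi
  have hj01 : j₀ < j₁ := by
    by_contra h
    push_neg at h
    have h2 : e.points j₁ ≤ e.points j₀ := e.mono h hj₀n
    rw [hj₀, hj₁] at h2
    exact absurd (d.increasing i hi) (not_lt_of_ge h2)
  have hfiber : Finset.filter (fun j => d.idx (e.points j) = i) (Finset.range e.n)
      = Finset.Ico j₀ j₁ := by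
    ext j
    simp only [Finset.mem_filter, Finset.mem_range, Finset.mem_Ico]
    constructor
    · rintro ⟨hj, hidx⟩
      obtain ⟨hlt, h1, h2⟩ := d.idx_spec hab (e.points_lb (le_of_lt hj)) (e.points_ub_strict hj)
      rw [hidx] at h1 h2
      constructor
      · by_contra h
        push_neg at h
        have h3 := e.smono h hj₀n
        rw [hj₀] at h3
        exact absurd h1 (not_le_of_gt h3)
      · by_contra h
        push_neg at h
        have h3 := e.mono h (le_of_lt hj)
        rw [hj₁] at h3
        exact absurd h2 (not_lt_of_ge h3)
    · rintro ⟨h1, h2⟩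
      have hj : j < e.n := lt_of_lt_of_le h2 hj₁n
      refine ⟨hj, d.idx_eq hab hi ?_ ?_⟩
      · rw [← hj₀]; exact e.mono h1 (le_of_lt hj)
      · rw [← hj₁]; exact e.smono h2 hj₁n
  rw [hfiber]
  have hgconst : ∀ j ∈ Finset.Ico j₀ j₁, g (e.points j) = g (d.points i) := by
    intro j hj
    rw [Finset.mem_Ico] at hj
    refine hg i hi _ ?_ ?_
    · rw [← hj₀]; exact e.mono hj.1 (le_of_lt (lt_of_lt_of_le hj.2 hj₁n))
    · rw [← hj₁]; exact e.smono hj.2 hj₁n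
  calc ∑ j ∈ Finset.Ico j₀ j₁,
        (α (e.points (j + 1)) (g (e.points j)) - α (e.points j) (g (e.points j)))
      = ∑ j ∈ Finset.Ico j₀ j₁,
        (α (e.points (j + 1)) (g (d.points i)) - α (e.points j) (g (d.points i))) :=
        Finset.sum_congr rfl (fun j hj => by rw [hgconst j hj])
    _ = α (e.points j₁) (g (d.points i)) - α (e.points j₀) (g (d.points i)) := by
        rw [Finset.sum_Ico_eq_sub _ (le_of_lt hj01),
          Finset.sum_range_sub (fun j => α (e.points j) (g (d.points i))),
          Finset.sum_range_sub (fun j => α (e.points j) (g (d.points i)))]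
        abel
    _ = α (d.points (i + 1)) (g (d.points i)) - α (d.points i) (g (d.points i)) := by
        rw [hj₀, hj₁]

theorem exists_refinement {a b : ℝ} (hab : a < b) (d₁ d₂ : RSPartition a b) :
    ∃ e : RSPartition a b, (∀ i, i ≤ d₁.n → ∃ j, j ≤ e.n ∧ e.points j = d₁.points i) ∧
      (∀ i, i ≤ d₂.n → ∃ j, j ≤ e.n ∧ e.points j = d₂.points i) := by
  classical
  set F : Finset ℝ := (Finset.range (d₁.n + 1)).image d₁.points ∪
      (Finset.range (d₂.n + 1)).image d₂.points with hF
  set L : List ℝ := F.sort (· ≤ ·) with hL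
  have hFmem : ∀ x ∈ F, a ≤ x ∧ x ≤ b := by
    intro x hx
    rw [hF, Finset.mem_union, Finset.mem_image, Finset.mem_image] at hx
    rcases hx with ⟨i, hi, rfl⟩ | ⟨i, hi, rfl⟩
    · rw [Finset.mem_range] at hi
      exact ⟨d₁.points_lb (by omega), d₁.points_ub (by omega)⟩
    · rw [Finset.mem_range] at hi
      exact ⟨d₂.points_lb (by omega), d₂.points_ub (by omega)⟩
  have haF : a ∈ F := Finset.mem_union_left _
    (Finset.mem_image.mpr ⟨0, Finset.mem_range.mpr (by omega), d₁.first_eq⟩)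
  have hbF : b ∈ F := Finset.mem_union_left _
    (Finset.mem_image.mpr ⟨d₁.n, Finset.mem_range.mpr (by omega), d₁.last_eq⟩)
  have hlen : L.length = F.card := Finset.length_sort _
  have hLpos : 0 < L.length := by
    rw [hlen]; exact Finset.card_pos.mpr ⟨a, haF⟩
  have hsorted : L.SortedLT := Finset.sortedLT_sort F
  have hmemL : ∀ x, x ∈ L ↔ x ∈ F := fun x => Finset.mem_sort _
  have hgetmem : ∀ {k : ℕ} (hk : k < L.length), L.getD k b ∈ F := by
    intro k hk
    rw [List.getD_eq_getElem _ _ hk, ← hmemL]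
    exact List.getElem_mem hk
  have hgetlt : ∀ {k l : ℕ}, k < l → (hl : l < L.length) → L.getD k b < L.getD l b := by
    intro k l hkl hl
    rw [List.getD_eq_getElem _ _ (lt_trans hkl hl), List.getD_eq_getElem _ _ hl]
    exact hsorted.getElem_lt_getElem_iff.mpr hkl
  have hgetle : ∀ {k l : ℕ}, k ≤ l → (hl : l < L.length) → L.getD k b ≤ L.getD l b := by
    intro k l hkl hl
    rcases Nat.eq_or_lt_of_le hkl with rfl | h
    · exact le_rfl
    · exact le_of_lt (hgetlt h hl)
  -- get index of an element of F
  have hidx : ∀ x ∈ F, ∃ k, k < L.length ∧ L.getD k b = x := by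
    intro x hx
    rw [← hmemL, List.mem_iff_getElem] at hx
    obtain ⟨k, hk, hkx⟩ := hx
    exact ⟨k, hk, by rw [List.getD_eq_getElem _ _ hk, hkx]⟩
  have hfirst : L.getD 0 b = a := by
    obtain ⟨k, hk, hkx⟩ := hidx a haF
    have h1 : a ≤ L.getD 0 b := (hFmem _ (hgetmem hLpos)).1
    have h2 : L.getD 0 b ≤ a := by rw [← hkx]; exact hgetle (Nat.zero_le _) hk
    linarith
  have hlast : L.getD (L.length - 1) b = b := by
    obtain ⟨k, hk, hkx⟩ := hidx b hbF
    have h1 : L.getD (L.length - 1) b ≤ b := (hFmem _ (hgetmem (by omega))).2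
    have h2 : b ≤ L.getD (L.length - 1) b := by
      have hk1 : k ≤ L.length - 1 := by omega
      have h3 := hgetle hk1 (show L.length - 1 < L.length by omega)
      rwa [hkx] at h3
    linarith
  refine ⟨⟨L.length - 1, fun k => L.getD k b, hfirst, hlast, ?_⟩, ?_, ?_⟩
  · intro i hi
    exact hgetlt (Nat.lt_succ_self i) (by omega)
  · intro i hi
    obtain ⟨k, hk, hkx⟩ := hidx (d₁.points i) (Finset.mem_union_left _
      (Finset.mem_image.mpr ⟨i, Finset.mem_range.mpr (by omega), rfl⟩))
    exact ⟨k, show k ≤ L.length - 1 by omega, hkx⟩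
  · intro i hi
    obtain ⟨k, hk, hkx⟩ := hidx (d₂.points i) (Finset.mem_union_right _
      (Finset.mem_image.mpr ⟨i, Finset.mem_range.mpr (by omega), rfl⟩))
    exact ⟨k, show k ≤ L.length - 1 by omega, hkx⟩


noncomputable def unif (a b : ℝ) (hab : a < b) (m : ℕ) : RSPartition a b where
  n := m + 1
  points := fun i => a + i * ((b - a) / (m + 1))
  first_eq := by simp
  last_eq := by
    have h : ((m : ℝ) + 1) ≠ 0 := by positivity
    push_cast
    field_simp
    ring
  increasing := by
    intro i _
    have h1 : (0:ℝ) < (b - a) / (m + 1) := div_pos (sub_pos.mpr hab) (by positivity)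
    push_cast
    nlinarith

theorem unif_mesh (a b : ℝ) (hab : a < b) (m i : ℕ) :
    (unif a b hab m).points (i + 1) - (unif a b hab m).points i = (b - a) / (m + 1) := by
  show a + ((i + 1 : ℕ) : ℝ) * ((b - a) / (m + 1)) - (a + (i : ℝ) * ((b - a) / (m + 1)))
      = (b - a) / (m + 1)
  push_cast
  ring

theorem unif_cont {g : ℝ → X} (hg : ContinuousOn g (Icc a b)) (p : Seminorm ℝ X)
    (hp : Continuous ⇑p) {ε : ℝ} (hε : 0 < ε) :
    ∃ δ : ℝ, 0 < δ ∧ ∀ s ∈ Icc a b, ∀ t ∈ Icc a b, |s - t| < δ → p (g s - g t) ≤ ε := by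
  have hU : {z : X | p z < ε} ∈ 𝓝 (0 : X) := by
    have ho : IsOpen {z : X | p z < ε} := isOpen_lt hp continuous_const
    exact ho.mem_nhds (by simp [hε])
  have hV : {uv : X × X | p (uv.2 - uv.1) < ε} ∈ uniformity X := by
    rw [uniformity_eq_comap_nhds_zero X]
    exact preimage_mem_comap hU
  have hgc : Continuous (fun s : Icc a b => g s) := hg.restrict
  have huc : UniformContinuous (fun s : Icc a b => g s) :=
    CompactSpace.uniformContinuous_of_continuous hgc
  have hpre := huc hV
  rw [Filter.mem_map, Metric.mem_uniformity_dist] at hpre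
  obtain ⟨δ, hδ, h⟩ := hpre
  refine ⟨δ, hδ, fun s hs t ht hst => ?_⟩
  have h2 := h (a := ⟨s, hs⟩) (b := ⟨t, ht⟩) (by rwa [Subtype.dist_eq, Real.dist_eq])
  simp only [Set.mem_preimage, Set.mem_setOf_eq] at h2
  rw [map_sub_rev]
  exact le_of_lt h2

theorem nhds_zero_seminorm [LocallyConvexSpace ℝ Y] {W : Set Y} (hW : W ∈ 𝓝 (0 : Y)) :
    ∃ (q : Seminorm ℝ Y) (r : ℝ), Continuous ⇑q ∧ 0 < r ∧ ∀ z : Y, q z < r → z ∈ W := by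
  have hb := (with_gaugeSeminormFamily (𝕜 := ℝ) (E := Y)).hasBasis_zero_ball
  rw [hb.mem_iff] at hW
  obtain ⟨⟨s, r⟩, hr, hsub⟩ := hW
  refine ⟨s.sup (gaugeSeminormFamily ℝ Y), r, ?_, hr, fun z hz => hsub ?_⟩
  · exact Seminorm.continuous (r := r) (hb.mem_of_mem hr)
  · rw [Seminorm.mem_ball_zero]; exact hz

theorem diff_est (hab : a < b) (α : ℝ → X →L[ℝ] Y) {q : Seminorm ℝ Y} {p : Seminorm ℝ X}
    (hSV : SV α q p a b < ⊤) (g : ℝ → X) {δ ε : ℝ} (hε : 0 < ε)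
    (hUC : ∀ s ∈ Icc a b, ∀ t ∈ Icc a b, |s - t| < 2 * δ → p (g s - g t) ≤ ε)
    (d₁ d₂ : RSPartition a b) (c₁ c₂ : ℕ → ℝ)
    (hm₁ : ∀ i, i < d₁.n → d₁.points (i + 1) - d₁.points i < δ)
    (hm₂ : ∀ i, i < d₂.n → d₂.points (i + 1) - d₂.points i < δ)
    (hc₁ : ∀ i, i < d₁.n → c₁ i ∈ Icc (d₁.points i) (d₁.points (i + 1)))
    (hc₂ : ∀ i, i < d₂.n → c₂ i ∈ Icc (d₂.points i) (d₂.points (i + 1))) :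
    q (RSsum α d₁ (fun i => g (c₁ i)) - RSsum α d₂ (fun i => g (c₂ i)))
      ≤ (SV α q p a b).toReal * ε := by
  obtain ⟨e, hsub₁, hsub₂⟩ := exists_refinement hab d₁ d₂
  set G₁ : ℝ → X := fun s => g (c₁ (d₁.idx s)) with hG₁def
  set G₂ : ℝ → X := fun s => g (c₂ (d₂.idx s)) with hG₂def
  have hG₁ : ∀ i, i < d₁.n → ∀ s, d₁.points i ≤ s → s < d₁.points (i + 1) →
      G₁ s = G₁ (d₁.points i) := by
    intro i hi s h1 h2
    have h3 : d₁.idx s = i := d₁.idx_eq hab hi h1 h2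
    have h4 : d₁.idx (d₁.points i) = i := d₁.idx_eq hab hi le_rfl (d₁.increasing i hi)
    rw [hG₁def]
    simp only [h3, h4]
  have hG₂ : ∀ i, i < d₂.n → ∀ s, d₂.points i ≤ s → s < d₂.points (i + 1) →
      G₂ s = G₂ (d₂.points i) := by
    intro i hi s h1 h2
    have h3 : d₂.idx s = i := d₂.idx_eq hab hi h1 h2
    have h4 : d₂.idx (d₂.points i) = i := d₂.idx_eq hab hi le_rfl (d₂.increasing i hi)
    rw [hG₂def]
    simp only [h3, h4]
  have key₁ : RSsum α e (fun j => G₁ (e.points j)) = RSsum α d₁ (fun i => g (c₁ i)) := by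
    rw [refine_sum hab α d₁ e hsub₁ G₁ hG₁]
    refine Finset.sum_congr rfl fun i hi => ?_
    rw [Finset.mem_range] at hi
    have h4 : d₁.idx (d₁.points i) = i := d₁.idx_eq hab hi le_rfl (d₁.increasing i hi)
    rw [hG₁def]
    simp only [h4]
  have key₂ : RSsum α e (fun j => G₂ (e.points j)) = RSsum α d₂ (fun i => g (c₂ i)) := by
    rw [refine_sum hab α d₂ e hsub₂ G₂ hG₂]
    refine Finset.sum_congr rfl fun i hi => ?_
    rw [Finset.mem_range] at hi
    have h4 : d₂.idx (d₂.points i) = i := d₂.idx_eq hab hi le_rfl (d₂.increasing i hi)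
    rw [hG₂def]
    simp only [h4]
  rw [← key₁, ← key₂, ← RSsum_sub]
  refine rssum_le α hSV e _ hε ?_
  intro j hj
  have ha' : a ≤ e.points j := e.points_lb (le_of_lt hj)
  have hb' : e.points j < b := e.points_ub_strict hj
  obtain ⟨hi₁, h11, h12⟩ := d₁.idx_spec hab ha' hb'
  obtain ⟨hi₂, h21, h22⟩ := d₂.idx_spec hab ha' hb'
  have hcc₁ := hc₁ _ hi₁
  have hcc₂ := hc₂ _ hi₂
  rw [Set.mem_Icc] at hcc₁ hcc₂
  have hmm₁ := hm₁ _ hi₁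
  have hmm₂ := hm₂ _ hi₂
  show p (g (c₁ (d₁.idx (e.points j))) - g (c₂ (d₂.idx (e.points j)))) ≤ ε
  have hd1 : |c₁ (d₁.idx (e.points j)) - e.points j| < δ :=
    abs_sub_lt_iff.mpr ⟨by linarith, by linarith⟩
  have hd2 : |c₂ (d₂.idx (e.points j)) - e.points j| < δ :=
    abs_sub_lt_iff.mpr ⟨by linarith, by linarith⟩
  refine hUC _ ?_ _ ?_ ?_
  · constructor
    · exact le_trans (d₁.points_lb (le_of_lt hi₁)) hcc₁.1
    · exact le_trans hcc₁.2 (d₁.points_ub hi₁)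
  · constructor
    · exact le_trans (d₂.points_lb (le_of_lt hi₂)) hcc₂.1
    · exact le_trans hcc₂.2 (d₂.points_ub hi₂)
  · calc |c₁ (d₁.idx (e.points j)) - c₂ (d₂.idx (e.points j))|
        ≤ |c₁ (d₁.idx (e.points j)) - e.points j| + |e.points j - c₂ (d₂.idx (e.points j))| :=
          abs_sub_le _ _ _
      _ < 2 * δ := by rw [abs_sub_comm (e.points j)]; linarith

theorem unif_tag (hab : a < b) (m : ℕ) : ∀ i, i < (unif a b hab m).n →
    (unif a b hab m).points i ∈
      Icc ((unif a b hab m).points i) ((unif a b hab m).points (i + 1)) :=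
  fun _ hi => ⟨le_rfl, le_of_lt ((unif a b hab m).increasing _ hi)⟩

theorem unif_fine (hab : a < b) {δ : ℝ} (hδ : 0 < δ) :
    ∃ N : ℕ, ∀ m, N ≤ m → ∀ i, i < (unif a b hab m).n →
      (unif a b hab m).points (i + 1) - (unif a b hab m).points i < δ := by
  obtain ⟨N, hN⟩ := exists_nat_gt ((b - a) / δ)
  refine ⟨N, fun m hm i _ => ?_⟩
  rw [unif_mesh]
  rw [div_lt_iff₀ (by positivity)]
  have h2 : (N : ℝ) ≤ m := by exact_mod_cast hm
  have h3 : (b - a) / δ < (m : ℝ) + 1 := by linarith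
  rw [div_lt_iff₀ hδ] at h3
  linarith [h3]

theorem key_est (hab : a < b) (α : ℝ → X →L[ℝ] Y) {q : Seminorm ℝ Y} {p : Seminorm ℝ X}
    (hp : Continuous ⇑p) (hSV : SV α q p a b < ⊤)
    {g : ℝ → X} (hg : ContinuousOn g (Icc a b)) {ε : ℝ} (hε : 0 < ε) :
    ∃ δ : ℝ, 0 < δ ∧ ∀ (d₁ d₂ : RSPartition a b) (c₁ c₂ : ℕ → ℝ),
      (∀ i, i < d₁.n → d₁.points (i + 1) - d₁.points i < δ) →
      (∀ i, i < d₂.n → d₂.points (i + 1) - d₂.points i < δ) →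
      (∀ i, i < d₁.n → c₁ i ∈ Icc (d₁.points i) (d₁.points (i + 1))) →
      (∀ i, i < d₂.n → c₂ i ∈ Icc (d₂.points i) (d₂.points (i + 1))) →
      q (RSsum α d₁ (fun i => g (c₁ i)) - RSsum α d₂ (fun i => g (c₂ i))) < ε := by
  have hT : 0 ≤ (SV α q p a b).toReal := ENNReal.toReal_nonneg
  set C := (SV α q p a b).toReal + 1 with hC
  have hC0 : 0 < C := by linarith
  set ε' := ε / (2 * C) with hε'
  have hε'0 : 0 < ε' := by positivity
  obtain ⟨δ₀, hδ₀, hUC⟩ := unif_cont hg p hp hε'0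
  refine ⟨δ₀ / 2, by positivity, fun d₁ d₂ c₁ c₂ h₁ h₂ hc₁ hc₂ => ?_⟩
  have hUC' : ∀ s ∈ Icc a b, ∀ t ∈ Icc a b, |s - t| < 2 * (δ₀ / 2) → p (g s - g t) ≤ ε' := by
    intro s hs t ht h
    exact hUC s hs t ht (by linarith)
  have h := diff_est hab α hSV g hε'0 hUC' d₁ d₂ c₁ c₂ h₁ h₂ hc₁ hc₂
  have h2 : (SV α q p a b).toReal * ε' < C * ε' :=
    mul_lt_mul_of_pos_right (by linarith) hε'0
  have h3 : C * ε' = ε / 2 := by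
    rw [hε']
    field_simp
  linarith

theorem exists_isRSIntegral [LocallyConvexSpace ℝ Y] (hab : a < b)
    (hY : SequentiallyComplete Y) (α : ℝ → X →L[ℝ] Y) (hα : BoundedSemivariation α a b)
    (g : ℝ → X) (hg : ContinuousOn g (Icc a b)) : ∃ y, IsRSIntegral α g a b y := by
  set u : ℕ → Y := fun m => RSsum α (unif a b hab m) (fun i => g ((unif a b hab m).points i))
    with hu
  have hcauchy : CauchySeq u := by
    rw [cauchySeq_iff]
    intro V hV
    rw [uniformity_eq_comap_nhds_zero Y, Filter.mem_comap] at hV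
    obtain ⟨W, hW, hWV⟩ := hV
    obtain ⟨q, r, hqc, hr, hqW⟩ := nhds_zero_seminorm hW
    obtain ⟨p, hpc, hSV⟩ := hα q hqc
    obtain ⟨δ, hδ, hkey⟩ := key_est hab α hpc hSV hg (half_pos hr)
    obtain ⟨N, hN⟩ := unif_fine hab hδ
    refine ⟨N, fun k hk l hl => ?_⟩
    apply hWV
    apply hqW
    show q (u l - u k) < r
    have h := hkey (unif a b hab l) (unif a b hab k) _ _ (hN l hl) (hN k hk)
      (unif_tag hab l) (unif_tag hab k)
    calc q (u l - u k) < r / 2 := h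
      _ < r := by linarith
  obtain ⟨y, hy⟩ := hY u hcauchy
  refine ⟨y, ?_⟩
  intro q hqc ε hε
  obtain ⟨p, hpc, hSV⟩ := hα q hqc
  obtain ⟨δ, hδ, hkey⟩ := key_est hab α hpc hSV hg (half_pos hε)
  refine ⟨δ, hδ, fun d c hm hc => ?_⟩
  have htail : Tendsto (fun m => q (u m - y)) atTop (𝓝 0) := by
    have h1 : Tendsto (fun m => u m - y) atTop (𝓝 (0 : Y)) := by
      simpa using hy.sub (tendsto_const_nhds (x := y))
    have h2 := (hqc.tendsto 0).comp h1
    simpa [map_zero, Function.comp_def] using h2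
  have hev : ∀ᶠ m in atTop, q (u m - y) < ε / 2 :=
    htail.eventually_lt_const (half_pos hε)
  obtain ⟨N, hN⟩ := unif_fine hab hδ
  obtain ⟨m, hm1, hm2⟩ := (hev.and (eventually_ge_atTop N)).exists
  have h1 := hkey d (unif a b hab m) c _ hm (hN m hm2) hc (unif_tag hab m)
  show q (RSsum α d (fun i => g (c i)) - y) < ε
  calc q (RSsum α d (fun i => g (c i)) - y)
      ≤ q (RSsum α d (fun i => g (c i)) - u m) + q (u m - y) := by
        have h2 := map_add_le_add q (RSsum α d (fun i => g (c i)) - u m) (u m - y)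
        rwa [sub_add_sub_cancel] at h2
    _ < ε := by linarith

end Aux

theorem stmt0 {X Y : Type*} [AddCommGroup X] [Module ℝ X] [UniformSpace X] [IsUniformAddGroup X]
    [ContinuousSMul ℝ X] [LocallyConvexSpace ℝ X] [T2Space X]
    [AddCommGroup Y] [Module ℝ Y] [UniformSpace Y] [IsUniformAddGroup Y]
    [ContinuousSMul ℝ Y] [LocallyConvexSpace ℝ Y] [T2Space Y]
    (a b : ℝ) (hab : a < b) (hY : SequentiallyComplete Y)
    (f : ℝ → X) (hf : ContinuousOn f (Set.Icc a b))
    (α : ℝ → X →L[ℝ] Y) (hα : BoundedSemivariation α a b) :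
    (∃ y : Y, IsRSIntegral α f a b y) ∧
    (∀ q : Seminorm ℝ Y, Continuous ⇑q →
      ∃ p : Seminorm ℝ X, Continuous ⇑p ∧ SV α q p a b < ⊤ ∧
        ∀ g : ℝ → X, ContinuousOn g (Set.Icc a b) →
          ∀ M : ℝ, (∀ s ∈ Set.Icc a b, p (g s) ≤ M) →
            q (RSIntegral α g a b) ≤ (SV α q p a b).toReal * M) := by
  constructor
  · exact exists_isRSIntegral hab hY α hα f hf
  · intro q hqc
    obtain ⟨p, hpc, hSV⟩ := hα q hqc
    refine ⟨p, hpc, hSV, ?_⟩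
    intro g hg M hM
    have hex : ∃ y, IsRSIntegral α g a b y := exists_isRSIntegral hab hY α hα g hg
    have hM0 : 0 ≤ M := le_trans (apply_nonneg p _) (hM a ⟨le_rfl, le_of_lt hab⟩)
    rw [RSIntegral, dif_pos hex]
    have hy := hex.choose_spec
    set y := hex.choose with hydef
    have hT : 0 ≤ (SV α q p a b).toReal := ENNReal.toReal_nonneg
    refine le_of_forall_pos_le_add ?_
    intro η hη
    set C := (SV α q p a b).toReal + 1 with hC
    have hC0 : 0 < C := by linarith
    set η' := η / (2 * C) with hη'
    have hη'0 : 0 < η' := by positivity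
    obtain ⟨δ, hδ, hq⟩ := hy q hqc (η / 2) (half_pos hη)
    obtain ⟨N, hN⟩ := unif_fine hab hδ
    set d := unif a b hab N with hd
    have hS := hq d (fun i => d.points i) (hN N le_rfl) (unif_tag hab N)
    have hS' : q (RSsum α d (fun i => g (d.points i)) - y) < η / 2 := hS
    have hqS : q (RSsum α d (fun i => g (d.points i))) ≤ (SV α q p a b).toReal * (M + η') := by
      refine rssum_le α hSV d _ (by linarith) ?_
      intro i hi
      have hmem : d.points i ∈ Set.Icc a b :=
        ⟨d.points_lb (le_of_lt hi), d.points_ub (le_of_lt hi)⟩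
      exact le_trans (hM _ hmem) (by linarith)
    have htri : q y ≤ q (y - RSsum α d (fun i => g (d.points i)))
        + q (RSsum α d (fun i => g (d.points i))) := by
      have h2 := map_add_le_add q (y - RSsum α d (fun i => g (d.points i)))
        (RSsum α d (fun i => g (d.points i)))
      rwa [sub_add_cancel] at h2
    have hrev : q (y - RSsum α d (fun i => g (d.points i)))
        = q (RSsum α d (fun i => g (d.points i)) - y) := map_sub_rev q _ _
    have hCη : C * η' = η / 2 := by
      rw [hη']
      field_simp
    have hSVC : (SV α q p a b).toReal ≤ C := by linarith
    have h5 : (SV α q p a b).toReal * η' ≤ C * η' :=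
      mul_le_mul_of_nonneg_right hSVC (le_of_lt hη'0)
    have h6 : (SV α q p a b).toReal * (M + η')
        = (SV α q p a b).toReal * M + (SV α q p a b).toReal * η' := by ring
    linarith
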